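/- Let M be a homogeneous, monotone mean on positive reals whose Hardy constant equals lim_{n→∞} n · M(1, 1/2, ..., 1/n) (this limit existing in [0,+∞]). Then M is a Hardy mean if and only if M is a weak-Hardy mean. -/

import Mathlib

open scoped ENNReal

/-- `M n v` is the value of the mean on the `(n+1)`-tuple `v`. -/
def IsMean (M : ∀ n : ℕ, (Fin (n+1) → ℝ) → ℝ) : Prop :=
  ∀ (n : ℕ) (v : Fin (n+1) → ℝ), (∀ i, 0 < v i) →
    Finset.univ.inf' Finset.univ_nonempty v ≤ M n v ∧
    M n v ≤ Finset.univ.sup' Finset.univ_nonempty v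

/-- `M` is (positively) homogeneous. -/
def IsHomogeneousMean (M : ∀ n : ℕ, (Fin (n+1) → ℝ) → ℝ) : Prop :=
  ∀ (n : ℕ) (v : Fin (n+1) → ℝ) (t : ℝ), 0 < t → (∀ i, 0 < v i) →
    M n (fun i => t * v i) = t * M n v

/-- `M` is nondecreasing in each variable (on positive tuples). -/
def IsMonotoneMean (M : ∀ n : ℕ, (Fin (n+1) → ℝ) → ℝ) : Prop :=
  ∀ (n : ℕ) (v w : Fin (n+1) → ℝ), (∀ i, 0 < v i) → (∀ i, v i ≤ w i) →
    M n v ≤ M n w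

/-- The set of (extended-real) Hardy constants of `M`: those `K` with
`∑ M(a_1,…,a_n) ≤ K ∑ a_n` for every positive summable `(a_n)`. -/
def HardyConstSet (M : ∀ n : ℕ, (Fin (n+1) → ℝ) → ℝ) : Set ℝ≥0∞ :=
  {K | ∀ a : ℕ → ℝ, (∀ n, 0 < a n) → (∑' n, ENNReal.ofReal (a n)) ≠ ⊤ →
    (∑' n, ENNReal.ofReal (M n (fun i => a i.1))) ≤ K * ∑' n, ENNReal.ofReal (a n)}

/-- The Hardy constant `Hc(M)`: the smallest extended real `K` as above. -/
noncomputable def HardyConstant (M : ∀ n : ℕ, (Fin (n+1) → ℝ) → ℝ) : ℝ≥0∞ :=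
  sInf (HardyConstSet M)

/-- `M` is a Hardy mean: some finite `K` works. -/
def IsHardyMean (M : ∀ n : ℕ, (Fin (n+1) → ℝ) → ℝ) : Prop :=
  ∃ K : ℝ≥0∞, K ≠ ⊤ ∧ K ∈ HardyConstSet M

/-- `M` is a weak-Hardy mean. -/
def IsWeakHardyMean (M : ∀ n : ℕ, (Fin (n+1) → ℝ) → ℝ) : Prop :=
  ∀ b : ℕ → ℝ, (∀ n, 0 < b n) → (∑' n, ENNReal.ofReal (b n)) ≠ ⊤ →
    (∑' n, ENNReal.ofReal (M n (fun i => b i.1))) ≠ ⊤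


private lemma aux_harmonic (a : ℕ) (C : ℝ) :
    ∃ m, C ≤ ∑ n ∈ Finset.Ico a m, (1 / (n + 1 : ℝ)) := by
  obtain ⟨m, hm1, hm2⟩ :=
    ((Real.tendsto_sum_range_one_div_nat_succ_atTop.eventually_ge_atTop
      (C + ∑ n ∈ Finset.range a, (1 / (n + 1 : ℝ)))).and
      (Filter.eventually_ge_atTop a)).exists
  refine ⟨m, ?_⟩
  have := Finset.sum_Ico_consecutive (fun n => (1 / (n + 1 : ℝ))) (Nat.zero_le a) hm2
  simp only [← Finset.range_eq_Ico] at this ⊢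
  linarith [this]

private lemma aux_step (h : ℕ → ℝ) (Hdiv : ∀ C : ℝ, ∃ N, ∀ n ≥ N, C ≤ h n)
    (p : ℕ) (s c : ℝ) :
    ∃ m, p < m ∧ (∀ n ≥ m, c ≤ h n) ∧ s ≤ ∑ n ∈ Finset.Ico p m, (1 / (n + 1 : ℝ)) := by
  obtain ⟨N, hN⟩ := Hdiv c
  obtain ⟨m0, hm0⟩ := aux_harmonic p s
  refine ⟨max m0 (max p N) + 1, ?_, ?_, ?_⟩
  · omega
  · intro n hn; exact hN n (by omega)
  · refine hm0.trans (Finset.sum_le_sum_of_subset_of_nonneg ?_ ?_)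
    · exact Finset.Ico_subset_Ico le_rfl (by omega)
    · intro i _ _; positivity

noncomputable def auxNS (h : ℕ → ℝ) (Hdiv : ∀ C : ℝ, ∃ N, ∀ n ≥ N, C ≤ h n) : ℕ → ℕ × ℝ
  | 0 => (0, 1)
  | (k+1) =>
      let p := auxNS h Hdiv k
      let m := (aux_step h Hdiv p.1 p.2 ((4 : ℝ) ^ (k+1))).choose
      (m, ∑ n ∈ Finset.Ico p.1 m, (1 / (n + 1 : ℝ)))

private lemma auxNS_spec (h : ℕ → ℝ) (Hdiv : ∀ C : ℝ, ∃ N, ∀ n ≥ N, C ≤ h n) (k : ℕ) :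
    (auxNS h Hdiv k).1 < (auxNS h Hdiv (k+1)).1 ∧
    (∀ n ≥ (auxNS h Hdiv (k+1)).1, (4 : ℝ) ^ (k+1) ≤ h n) ∧
    (auxNS h Hdiv k).2 ≤ (auxNS h Hdiv (k+1)).2 ∧
    (auxNS h Hdiv (k+1)).2
      = ∑ n ∈ Finset.Ico (auxNS h Hdiv k).1 (auxNS h Hdiv (k+1)).1, (1 / (n + 1 : ℝ)) := by
  have hspec := (aux_step h Hdiv (auxNS h Hdiv k).1 (auxNS h Hdiv k).2 ((4 : ℝ) ^ (k+1))).choose_spec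
  have heq : auxNS h Hdiv (k+1)
      = ((aux_step h Hdiv (auxNS h Hdiv k).1 (auxNS h Hdiv k).2 ((4 : ℝ) ^ (k+1))).choose,
        ∑ n ∈ Finset.Ico (auxNS h Hdiv k).1
          (aux_step h Hdiv (auxNS h Hdiv k).1 (auxNS h Hdiv k).2 ((4 : ℝ) ^ (k+1))).choose,
          (1 / (n + 1 : ℝ))) := rfl
  rw [heq]
  exact ⟨hspec.1, hspec.2.1, hspec.2.2, rfl⟩

private lemma auxNS_S_one (h : ℕ → ℝ) (Hdiv : ∀ C : ℝ, ∃ N, ∀ n ≥ N, C ≤ h n) (k : ℕ) :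
    (1 : ℝ) ≤ (auxNS h Hdiv k).2 := by
  induction k with
  | zero => simp [auxNS]
  | succ k ih => exact ih.trans (auxNS_spec h Hdiv k).2.2.1

private lemma auxNS_nmono (h : ℕ → ℝ) (Hdiv : ∀ C : ℝ, ∃ N, ∀ n ≥ N, C ≤ h n) :
    StrictMono (fun k => (auxNS h Hdiv k).1) :=
  strictMono_nat_of_lt_succ (fun k => (auxNS_spec h Hdiv k).1)

private lemma auxNS_le_n (h : ℕ → ℝ) (Hdiv : ∀ C : ℝ, ∃ N, ∀ n ≥ N, C ≤ h n) (k : ℕ) :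
    k ≤ (auxNS h Hdiv k).1 := by
  induction k with
  | zero => simp
  | succ k ih => exact Nat.lt_of_le_of_lt ih (auxNS_spec h Hdiv k).1

private lemma auxNS_n0 (h : ℕ → ℝ) (Hdiv : ∀ C : ℝ, ∃ N, ∀ n ≥ N, C ≤ h n) :
    (auxNS h Hdiv 0).1 = 0 := rfl

private lemma auxNS_hge (h : ℕ → ℝ) (Hdiv : ∀ C : ℝ, ∃ N, ∀ n ≥ N, C ≤ h n) (k n : ℕ)
    (hk : 1 ≤ k) (hn : (auxNS h Hdiv k).1 ≤ n) : (4 : ℝ) ^ k ≤ h n := by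
  obtain ⟨j, rfl⟩ := Nat.exists_eq_add_of_le' hk
  exact (auxNS_spec h Hdiv j).2.1 n hn

private lemma sum_blocks (N : ℕ → ℕ) (hN0 : N 0 = 0) (hNm : Monotone N) (f : ℕ → ℝ) (K : ℕ) :
    ∑ n ∈ Finset.range (N K), f n
      = ∑ k ∈ Finset.range K, ∑ n ∈ Finset.Ico (N k) (N (k+1)), f n := by
  induction K with
  | zero => simp [hN0]
  | succ K ih =>
      rw [Finset.sum_range_succ, ← ih, Finset.range_eq_Ico, Finset.range_eq_Ico]
      exact (Finset.sum_Ico_consecutive f (Nat.zero_le (N K)) (hNm (Nat.le_succ K))).symm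

private lemma hc_mem (M : ∀ n : ℕ, (Fin (n+1) → ℝ) → ℝ) :
    HardyConstant M ∈ HardyConstSet M := by
  intro a ha hs
  have hS0 : (∑' n, ENNReal.ofReal (a n)) ≠ 0 := by
    intro h0
    exact absurd ((ENNReal.le_tsum 0).trans_eq h0)
      (by simpa using (ENNReal.ofReal_pos.2 (ha 0)).ne')
  have key : ∀ K ∈ HardyConstSet M,
      (∑' n, ENNReal.ofReal (M n (fun i => a i.1))) / (∑' n, ENNReal.ofReal (a n)) ≤ K :=
    fun K hK => (ENNReal.div_le_iff_le_mul (Or.inl hS0) (Or.inl hs)).2 (hK a ha hs)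
  have h1 : (∑' n, ENNReal.ofReal (M n (fun i => a i.1))) / (∑' n, ENNReal.ofReal (a n))
      ≤ HardyConstant M := le_sInf key
  calc (∑' n, ENNReal.ofReal (M n (fun i => a i.1)))
      = (∑' n, ENNReal.ofReal (M n (fun i => a i.1))) / (∑' n, ENNReal.ofReal (a n))
        * (∑' n, ENNReal.ofReal (a n)) := (ENNReal.div_mul_cancel hS0 hs).symm
    _ ≤ HardyConstant M * ∑' n, ENNReal.ofReal (a n) := mul_le_mul_left h1 _

/-- a homogeneous monotone mean whose Hardy constant equals
`lim_n n · M(1, 1/2, …, 1/n)` (the limit existing in `[0,∞]`) is a Hardy mean iff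
it is a weak-Hardy mean. -/
theorem stmt7 (M : ∀ n : ℕ, (Fin (n+1) → ℝ) → ℝ) (hM : IsMean M)
    (hhom : IsHomogeneousMean M) (hmono : IsMonotoneMean M)
    (hlim : Filter.Tendsto
      (fun n : ℕ => ENNReal.ofReal ((n + 1 : ℝ) * M n (fun i => 1 / (i.1 + 1 : ℝ))))
      Filter.atTop (nhds (HardyConstant M))) :
    IsHardyMean M ↔ IsWeakHardyMean M := by
  have hMpos : ∀ n (v : Fin (n+1) → ℝ), (∀ i, 0 < v i) → 0 < M n v := by
    intro n v hv
    refine lt_of_lt_of_le ?_ (hM n v hv).1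
    rw [Finset.lt_inf'_iff]
    exact fun i _ => hv i
  constructor
  · rintro ⟨K, hK, hmem⟩ b hb hbs
    exact ne_top_of_le_ne_top (ENNReal.mul_lt_top hK.lt_top hbs.lt_top).ne (hmem b hb hbs)
  · intro hweak
    have hne : HardyConstant M ≠ ⊤ := by
      by_contra htop
      set h : ℕ → ℝ := fun n => (n + 1 : ℝ) * M n (fun i => 1 / (i.1 + 1 : ℝ)) with hh
      have hhpos : ∀ n, 0 < h n :=
        fun n => mul_pos (by positivity) (hMpos n _ (fun i => by positivity))
      have Hdiv : ∀ C : ℝ, ∃ N, ∀ n ≥ N, C ≤ h n := by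
        intro C
        rw [htop] at hlim
        obtain ⟨N, hN⟩ :=
          Filter.eventually_atTop.1 (ENNReal.tendsto_nhds_top_iff_nat.1 hlim ⌈C⌉₊)
        refine ⟨N, fun n hn => ?_⟩
        have h1 := hN n hn
        rcases le_or_gt C 0 with hC | hC
        · exact hC.trans (hhpos n).le
        · have h2 : ENNReal.ofReal C ≤ ((⌈C⌉₊ : ℕ) : ℝ≥0∞) := by
            rw [← ENNReal.ofReal_natCast]
            exact ENNReal.ofReal_le_ofReal (Nat.le_ceil C)
          exact ((ENNReal.ofReal_lt_ofReal_iff (hhpos n)).1 (h2.trans_lt h1)).le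
      set N : ℕ → ℕ := fun k => (auxNS h Hdiv k).1 with hNdef
      set S : ℕ → ℝ := fun k => (auxNS h Hdiv k).2 with hSdef
      have hN0 : N 0 = 0 := rfl
      have hNmono : Monotone N := (auxNS_nmono h Hdiv).monotone
      have hkN : ∀ k, k ≤ N k := auxNS_le_n h Hdiv
      have hS1 : ∀ k, (1 : ℝ) ≤ S k := auxNS_S_one h Hdiv
      have hSpos : ∀ k, (0 : ℝ) < S k := fun k => zero_lt_one.trans_le (hS1 k)
      have hSm : Monotone S :=
        monotone_nat_of_le_succ (fun k => (auxNS_spec h Hdiv k).2.2.1)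
      have hSsum : ∀ k, ∑ n ∈ Finset.Ico (N k) (N (k+1)), (1 / (n + 1 : ℝ)) = S (k+1) :=
        fun k => ((auxNS_spec h Hdiv k).2.2.2).symm
      have hhge : ∀ k n, 1 ≤ k → N k ≤ n → (4 : ℝ) ^ k ≤ h n :=
        fun k n hk hn => auxNS_hge h Hdiv k n hk hn
      set τ : ℕ → ℝ := fun k => (1/4 : ℝ) ^ k / S (k+1) with hτ
      have hτpos : ∀ k, 0 < τ k := fun k => div_pos (by positivity) (hSpos _)
      have hτanti : ∀ j k, j ≤ k → τ k ≤ τ j := by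
        intro j k hjk
        apply div_le_div₀ (by positivity)
          (pow_le_pow_of_le_one (by norm_num) (by norm_num) hjk) (hSpos _)
          (hSm (by omega))
      set B : ℕ → ℕ := fun n => Nat.findGreatest (fun k => N k ≤ n) n with hBdef
      have hBP : ∀ n, N (B n) ≤ n := by
        intro n
        exact Nat.findGreatest_spec (P := fun k => N k ≤ n) (Nat.zero_le n)
          (by simpa [hN0] using Nat.zero_le n)
      have hBmono : ∀ i n, i ≤ n → B i ≤ B n := by
        intro i n hin
        exact Nat.le_findGreatest ((Nat.findGreatest_le i).trans hin) ((hBP i).trans hin)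
      have hBeq : ∀ k n, N k ≤ n → n < N (k+1) → B n = k := by
        intro k n h1 h2
        rw [hBdef]
        rw [Nat.findGreatest_eq_iff]
        refine ⟨(hkN k).trans h1, fun _ => h1, fun j hj _ hNj => ?_⟩
        exact absurd (lt_of_le_of_lt (le_trans (hNmono hj) hNj) h2) (lt_irrefl _)
      set a : ℕ → ℝ := fun n => τ (B n) * (1 / (n + 1 : ℝ)) with ha
      have hapos : ∀ n, 0 < a n := fun n => mul_pos (hτpos _) (by positivity)
      have hablock : ∀ k, ∑ n ∈ Finset.Ico (N k) (N (k+1)), a n = (1/4 : ℝ) ^ k := by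
        intro k
        have hcong : ∀ n ∈ Finset.Ico (N k) (N (k+1)), a n = τ k * (1 / (n + 1 : ℝ)) := by
          intro n hn
          rw [Finset.mem_Ico] at hn
          rw [ha]
          simp only
          rw [hBeq k n hn.1 hn.2]
        rw [Finset.sum_congr rfl hcong, ← Finset.mul_sum, hSsum k, hτ]
        simp only
        field_simp
        exact div_self (hSpos (k+1)).ne'
      have hsum_a_blocks : ∀ K, ∑ n ∈ Finset.range (N K), a n ≤ 2 := by
        intro K
        rw [sum_blocks N hN0 hNmono a K, Finset.sum_congr rfl (fun k _ => hablock k)]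
        rw [geom_sum_eq (by norm_num)]
        have hg : (0 : ℝ) ≤ (1/4 : ℝ) ^ K := by positivity
        rw [div_le_iff_of_neg (by norm_num : (1/4 : ℝ) - 1 < 0)]
        linarith
      have hasum_ne_top : (∑' n, ENNReal.ofReal (a n)) ≠ ⊤ := by
        rw [ENNReal.tsum_eq_iSup_sum]
        refine ne_top_of_le_ne_top (show ENNReal.ofReal 2 ≠ ⊤ by simp)
          (iSup_le fun s => ?_)
        have hsub : s ⊆ Finset.range (N (s.sup id + 1)) := by
          intro x hx
          rw [Finset.mem_range]
          exact lt_of_lt_of_le (Nat.lt_succ_of_le (Finset.le_sup (f := id) hx))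
            (hkN (s.sup id + 1))
        calc ∑ x ∈ s, ENNReal.ofReal (a x)
            ≤ ∑ x ∈ Finset.range (N (s.sup id + 1)), ENNReal.ofReal (a x) :=
              Finset.sum_le_sum_of_subset hsub
          _ = ENNReal.ofReal (∑ x ∈ Finset.range (N (s.sup id + 1)), a x) :=
              (ENNReal.ofReal_sum_of_nonneg (fun i _ => (hapos i).le)).symm
          _ ≤ ENNReal.ofReal 2 := ENNReal.ofReal_le_ofReal (hsum_a_blocks _)
      have hMlow : ∀ k n, 1 ≤ k → N k ≤ n → n < N (k+1) →
          τ k * ((4 : ℝ) ^ k * (1 / (n + 1 : ℝ))) ≤ M n (fun i => a i.1) := by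
        intro k n hk h1 h2
        have hBn : B n = k := hBeq k n h1 h2
        have step1 : M n (fun i => τ k * (1 / (i.1 + 1 : ℝ))) ≤ M n (fun i => a i.1) := by
          apply hmono n _ _ (fun i => mul_pos (hτpos k) (by positivity))
          intro i
          have hile : i.1 ≤ n := Nat.lt_succ_iff.1 i.isLt
          have hBle : B i.1 ≤ k := hBn ▸ hBmono i.1 n hile
          exact mul_le_mul_of_nonneg_right (hτanti _ _ hBle) (by positivity)
        have step2 : M n (fun i => τ k * (1 / (i.1 + 1 : ℝ)))
            = τ k * M n (fun i => 1 / (i.1 + 1 : ℝ)) :=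
          hhom n _ (τ k) (hτpos k) (fun i => by positivity)
        have step3 : (4 : ℝ) ^ k * (1 / (n + 1 : ℝ)) ≤ M n (fun i => 1 / (i.1 + 1 : ℝ)) := by
          have h4 : (4 : ℝ) ^ k ≤ h n := hhge k n hk h1
          rw [hh] at h4
          simp only at h4
          rw [mul_comm] at h4
          rw [mul_one_div, div_le_iff₀ (by positivity : (0:ℝ) < (n:ℝ) + 1)]
          exact h4
        calc τ k * ((4 : ℝ) ^ k * (1 / (n + 1 : ℝ)))
            ≤ τ k * M n (fun i => 1 / (i.1 + 1 : ℝ)) :=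
              mul_le_mul_of_nonneg_left step3 (hτpos k).le
          _ = M n (fun i => τ k * (1 / (i.1 + 1 : ℝ))) := step2.symm
          _ ≤ M n (fun i => a i.1) := step1
      have hMblock : ∀ k, 1 ≤ k →
          (1 : ℝ) ≤ ∑ n ∈ Finset.Ico (N k) (N (k+1)), M n (fun i => a i.1) := by
        intro k hk
        have hle : ∑ n ∈ Finset.Ico (N k) (N (k+1)), τ k * ((4:ℝ)^k * (1 / (n + 1 : ℝ)))
            ≤ ∑ n ∈ Finset.Ico (N k) (N (k+1)), M n (fun i => a i.1) := by
          refine Finset.sum_le_sum (fun n hn => ?_)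
          rw [Finset.mem_Ico] at hn
          exact hMlow k n hk hn.1 hn.2
        refine le_trans ?_ hle
        have : ∑ n ∈ Finset.Ico (N k) (N (k+1)), τ k * ((4:ℝ)^k * (1 / (n + 1 : ℝ)))
            = τ k * ((4:ℝ)^k * S (k+1)) := by
          rw [← Finset.mul_sum]
          congr 1
          rw [← Finset.mul_sum, hSsum k]
        rw [this]
        have h14 : τ k * ((4:ℝ) ^ k * S (k+1)) = 1 := by
          rw [hτ]
          simp only
          rw [div_mul_eq_mul_div, ← mul_assoc, one_div, inv_pow,
            inv_mul_cancel₀ (by positivity : ((4:ℝ)^k) ≠ 0), one_mul, div_self (hSpos _).ne']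
        rw [h14]
      have hMsum_top : (∑' n, ENNReal.ofReal (M n (fun i => a i.1))) = ⊤ := by
        apply top_le_iff.1
        rw [← ENNReal.iSup_natCast]
        refine iSup_le fun K => ?_
        have hreal : (K : ℝ) ≤ ∑ n ∈ Finset.range (N (K+1)), M n (fun i => a i.1) := by
          rw [sum_blocks N hN0 hNmono _ (K+1)]
          have hstep : ∑ k ∈ Finset.Ico 1 (K+1), (1:ℝ)
              ≤ ∑ k ∈ Finset.Ico 1 (K+1), ∑ n ∈ Finset.Ico (N k) (N (k+1)),
                  M n (fun i => a i.1) := by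
            refine Finset.sum_le_sum (fun k hk => hMblock k (Finset.mem_Ico.1 hk).1)
          have hcard : ∑ k ∈ Finset.Ico 1 (K+1), (1:ℝ) = (K : ℝ) := by
            simp [Nat.card_Ico]
          refine le_trans (le_of_eq hcard.symm) (hstep.trans ?_)
          refine Finset.sum_le_sum_of_subset_of_nonneg ?_ ?_
          · intro x hx
            rw [Finset.mem_Ico] at hx
            rw [Finset.mem_range]
            omega
          · intro k _ _
            exact Finset.sum_nonneg (fun n _ => (hMpos n _ (fun i => hapos _)).le)
        calc (K : ℝ≥0∞) = ENNReal.ofReal (K : ℝ) := (ENNReal.ofReal_natCast K).symm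
          _ ≤ ENNReal.ofReal (∑ n ∈ Finset.range (N (K+1)), M n (fun i => a i.1)) :=
              ENNReal.ofReal_le_ofReal hreal
          _ = ∑ n ∈ Finset.range (N (K+1)), ENNReal.ofReal (M n (fun i => a i.1)) :=
              ENNReal.ofReal_sum_of_nonneg (fun n _ => (hMpos n _ (fun i => hapos _)).le)
          _ ≤ ∑' n, ENNReal.ofReal (M n (fun i => a i.1)) :=
              ENNReal.sum_le_tsum _
      exact hweak a hapos hasum_ne_top hMsum_top
    exact ⟨HardyConstant M, hne, hc_mem M⟩
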